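/- For P, Q ∈ Γ_n with 0 < r ≤ p_i/q_i ≤ R for all i, the relative Jensen-Shannon divergence F(P||Q) = ∑p_i ln(2p_i/(p_i+q_i)) satisfies ((R+1)/(8R))·Δ(P||Q) ≤ F(P||Q) ≤ ((r+1)/(8r))·Δ(P||Q), where Δ(P||Q) = ∑(p_i - q_i)²/(p_i + q_i). -/

import Mathlib

open Finset Real

private lemma one_sub_inv_le_log {x : ℝ} (hx : 0 < x) : 1 - x⁻¹ ≤ Real.log x := by
  have := Real.log_le_sub_one_of_pos (x := x⁻¹) (by positivity)
  rw [Real.log_inv] at this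
  have : x⁻¹⁻¹ = x := inv_inv x
  have h := Real.log_le_sub_one_of_pos (x := x⁻¹) (by positivity)
  rw [Real.log_inv] at h
  linarith

private lemma hasDeriv_g1 (x : ℝ) (hx : 0 < x) :
    HasDerivAt (fun x : ℝ => x * Real.log x - x + 1 - (x-1)^2/(2*x))
      (Real.log x - 1/2 + 1/(2*x^2)) x := by
  have hx0 : x ≠ 0 := hx.ne'
  have h1 : HasDerivAt (fun x : ℝ => x * Real.log x) (1 * Real.log x + x * x⁻¹) x :=
    (hasDerivAt_id x).mul (Real.hasDerivAt_log hx0)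
  have ha : HasDerivAt (fun x : ℝ => (x-1)^2) (2 * (x-1)^1 * 1) x := by
    simpa using ((hasDerivAt_id x).sub_const 1).fun_pow 2
  have hb : HasDerivAt (fun x : ℝ => 2*x) 2 x := by
    simpa using (hasDerivAt_id x).const_mul 2
  have h2 := ha.div hb (by positivity)
  have h := ((h1.sub (hasDerivAt_id x)).add_const 1).sub h2
  refine h.congr_deriv ?_
  field_simp
  ring

private lemma hasDeriv_g2 (x : ℝ) (hx : 0 < x) :
    HasDerivAt (fun x : ℝ => x * Real.log x - x + 1 - (x-1)^2/2)
      (Real.log x - x + 1) x := by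
  have hx0 : x ≠ 0 := hx.ne'
  have h1 : HasDerivAt (fun x : ℝ => x * Real.log x) (1 * Real.log x + x * x⁻¹) x :=
    (hasDerivAt_id x).mul (Real.hasDerivAt_log hx0)
  have ha : HasDerivAt (fun x : ℝ => (x-1)^2/2) ((2 * (x-1)^1 * 1)/2) x := by
    exact (((hasDerivAt_id x).sub_const 1).pow 2).div_const 2
  have h := ((h1.sub (hasDerivAt_id x)).add_const 1).sub ha
  refine h.congr_deriv ?_
  field_simp
  ring

private lemma g1_mono : MonotoneOn (fun x : ℝ => x * Real.log x - x + 1 - (x-1)^2/(2*x))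
    (Set.Ioi 0) := by
  apply monotoneOn_of_deriv_nonneg (convex_Ioi 0)
  · exact fun x hx => (hasDeriv_g1 x hx).continuousAt.continuousWithinAt
  · rw [interior_Ioi]
    exact fun x hx => (hasDeriv_g1 x hx).differentiableAt.differentiableWithinAt
  · rw [interior_Ioi]
    intro x hx
    have hx' : (0:ℝ) < x := hx
    have hx0 : x ≠ 0 := ne_of_gt hx'
    rw [(hasDeriv_g1 x hx').deriv]
    have hlog := one_sub_inv_le_log hx'
    have e : 1 - x⁻¹ - 1/2 + 1/(2*x^2) = (x-1)^2/(2*x^2) := by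
      field_simp
      ring
    have hpos : (0:ℝ) ≤ (x-1)^2/(2*x^2) := by positivity
    linarith

private lemma g2_anti : AntitoneOn (fun x : ℝ => x * Real.log x - x + 1 - (x-1)^2/2)
    (Set.Ioi 0) := by
  apply antitoneOn_of_deriv_nonpos (convex_Ioi 0)
  · exact fun x hx => (hasDeriv_g2 x hx).continuousAt.continuousWithinAt
  · rw [interior_Ioi]
    exact fun x hx => (hasDeriv_g2 x hx).differentiableAt.differentiableWithinAt
  · rw [interior_Ioi]
    intro x hx
    rw [(hasDeriv_g2 x hx).deriv]
    have := Real.log_le_sub_one_of_pos hx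
    linarith

private lemma phi_low {t T : ℝ} (ht : 0 < t) (htT : t ≤ T) (hT : 1 ≤ T) :
    (t-1)^2/(2*T) ≤ t * Real.log t - t + 1 := by
  have hT0 : 0 < T := by linarith
  rcases le_total t 1 with h1 | h1
  · have key := g2_anti (Set.mem_Ioi.2 ht) (Set.mem_Ioi.2 (by norm_num : (0:ℝ) < 1)) h1
    simp only [Real.log_one] at key
    have h2 : (t-1)^2/(2*T) ≤ (t-1)^2/2 :=
      div_le_div_of_nonneg_left (sq_nonneg _) (by norm_num) (by linarith)
    have : (t-1)^2/2 ≤ t * Real.log t - t + 1 := by norm_num at key; linarith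
    linarith
  · have key := g1_mono (Set.mem_Ioi.2 (by norm_num : (0:ℝ) < 1)) (Set.mem_Ioi.2 ht) h1
    simp only [Real.log_one] at key
    have h2 : (t-1)^2/(2*T) ≤ (t-1)^2/(2*t) :=
      div_le_div_of_nonneg_left (sq_nonneg _) (by linarith) (by linarith)
    have : (t-1)^2/(2*t) ≤ t * Real.log t - t + 1 := by norm_num at key; linarith
    linarith

private lemma phi_high {t τ : ℝ} (hτ : 0 < τ) (hτt : τ ≤ t) (hτ1 : τ ≤ 1) :
    t * Real.log t - t + 1 ≤ (t-1)^2/(2*τ) := by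
  have ht : 0 < t := lt_of_lt_of_le hτ hτt
  rcases le_total t 1 with h1 | h1
  · have key := g1_mono (Set.mem_Ioi.2 ht) (Set.mem_Ioi.2 (by norm_num : (0:ℝ) < 1)) h1
    simp only [Real.log_one] at key
    have h2 : (t-1)^2/(2*t) ≤ (t-1)^2/(2*τ) :=
      div_le_div_of_nonneg_left (sq_nonneg _) (by linarith) (by linarith)
    have : t * Real.log t - t + 1 ≤ (t-1)^2/(2*t) := by norm_num at key; linarith
    linarith
  · have key := g2_anti (Set.mem_Ioi.2 (by norm_num : (0:ℝ) < 1)) (Set.mem_Ioi.2 ht) h1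
    simp only [Real.log_one] at key
    have h2 : (t-1)^2/2 ≤ (t-1)^2/(2*τ) :=
      div_le_div_of_nonneg_left (sq_nonneg _) (by linarith) (by linarith)
    have : t * Real.log t - t + 1 ≤ (t-1)^2/2 := by norm_num at key; linarith
    linarith

private lemma term_low (a b T : ℝ) (ha : 0 < a) (hb : 0 < b) (hT : 1 ≤ T)
    (hab : 2*a/(a+b) ≤ T) :
    1/(4*T) * ((a-b)^2/(a+b)) ≤ a * Real.log (2*a/(a+b)) + (b-a)/2 := by
  have hs : 0 < a + b := by linarith
  have hs0 : a + b ≠ 0 := hs.ne'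
  have ht : 0 < 2*a/(a+b) := by positivity
  have hT0 : (0:ℝ) < T := by linarith
  have key := phi_low ht hab hT
  have e1 : a * Real.log (2*a/(a+b)) + (b-a)/2
      = ((a+b)/2) * ((2*a/(a+b)) * Real.log (2*a/(a+b)) - (2*a/(a+b)) + 1) := by
    generalize Real.log (2*a/(a+b)) = L
    field_simp
    ring
  have e2 : 1/(4*T) * ((a-b)^2/(a+b)) = ((a+b)/2) * ((2*a/(a+b)-1)^2/(2*T)) := by
    field_simp
    ring
  rw [e1, e2]
  exact mul_le_mul_of_nonneg_left key (by positivity)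

private lemma term_high (a b τ : ℝ) (ha : 0 < a) (hb : 0 < b) (hτ : 0 < τ) (hτ1 : τ ≤ 1)
    (hτt : τ ≤ 2*a/(a+b)) :
    a * Real.log (2*a/(a+b)) + (b-a)/2 ≤ 1/(4*τ) * ((a-b)^2/(a+b)) := by
  have hs : 0 < a + b := by linarith
  have hs0 : a + b ≠ 0 := hs.ne'
  have key := phi_high hτ hτt hτ1
  have e1 : a * Real.log (2*a/(a+b)) + (b-a)/2
      = ((a+b)/2) * ((2*a/(a+b)) * Real.log (2*a/(a+b)) - (2*a/(a+b)) + 1) := by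
    generalize Real.log (2*a/(a+b)) = L
    field_simp
    ring
  have e2 : 1/(4*τ) * ((a-b)^2/(a+b)) = ((a+b)/2) * ((2*a/(a+b)-1)^2/(2*τ)) := by
    field_simp
    ring
  rw [e1, e2]
  exact mul_le_mul_of_nonneg_left key (by positivity)

theorem stmt10 (n : ℕ) (p q : Fin n → ℝ)
    (hp : ∀ i, 0 < p i) (hq : ∀ i, 0 < q i)
    (hp1 : ∑ i, p i = 1) (hq1 : ∑ i, q i = 1)
    (r R : ℝ) (hr : 0 < r) (hrR : ∀ i, r ≤ p i / q i ∧ p i / q i ≤ R) :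
    ((R+1)/(8*R)) * (∑ i, (p i - q i)^2 / (p i + q i)) ≤ (∑ i, p i * Real.log (2 * p i / (p i + q i))) ∧ (∑ i, p i * Real.log (2 * p i / (p i + q i))) ≤ ((r+1)/(8*r)) * (∑ i, (p i - q i)^2 / (p i + q i)) := by
  have hpRq : ∀ i, p i ≤ R * q i := by
    intro i
    have h := (hrR i).2
    rw [div_le_iff₀ (hq i)] at h
    exact h
  have hrqp : ∀ i, r * q i ≤ p i := by
    intro i
    have h := (hrR i).1
    rw [le_div_iff₀ (hq i)] at h
    linarith
  have hR1 : 1 ≤ R := by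
    have h := Finset.sum_le_sum (fun i (_ : i ∈ Finset.univ) => hpRq i)
    rw [hp1, ← Finset.mul_sum, hq1, mul_one] at h
    exact h
  have hr1 : r ≤ 1 := by
    have h := Finset.sum_le_sum (fun i (_ : i ∈ Finset.univ) => hrqp i)
    rw [hp1, ← Finset.mul_sum, hq1, mul_one] at h
    exact h
  have hR0 : (0:ℝ) < R := by linarith
  have hzero : ∑ i, (q i - p i)/2 = 0 := by
    rw [← Finset.sum_div, Finset.sum_sub_distrib, hp1, hq1]
    norm_num
  have hF : ∑ i, p i * Real.log (2 * p i / (p i + q i))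
      = ∑ i, (p i * Real.log (2 * p i / (p i + q i)) + (q i - p i)/2) := by
    rw [Finset.sum_add_distrib, hzero, add_zero]
  constructor
  · rw [hF, Finset.mul_sum]
    apply Finset.sum_le_sum
    intro i _
    have hTi : 2 * p i / (p i + q i) ≤ 2*R/(R+1) := by
      rw [div_le_div_iff₀ (by have := hp i; have := hq i; linarith) (by linarith)]
      have := hpRq i
      nlinarith
    have hT1 : (1:ℝ) ≤ 2*R/(R+1) := by
      rw [le_div_iff₀ (by linarith)]
      linarith
    have h := term_low (p i) (q i) (2*R/(R+1)) (hp i) (hq i) hT1 hTi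
    have e : (R+1)/(8*R) = 1/(4*(2*R/(R+1))) := by
      field_simp
      norm_num
    rw [e]
    exact h
  · rw [hF, Finset.mul_sum]
    apply Finset.sum_le_sum
    intro i _
    have hτi : 2*r/(r+1) ≤ 2 * p i / (p i + q i) := by
      rw [div_le_div_iff₀ (by linarith) (by have := hp i; have := hq i; linarith)]
      have := hrqp i
      nlinarith
    have hτ1 : 2*r/(r+1) ≤ 1 := by
      rw [div_le_one (by linarith)]
      linarith
    have hτ0 : (0:ℝ) < 2*r/(r+1) := by positivity
    have h := term_high (p i) (q i) (2*r/(r+1)) (hp i) (hq i) hτ0 hτ1 hτi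
    have e : (r+1)/(8*r) = 1/(4*(2*r/(r+1))) := by
      field_simp
      norm_num
    rw [e]
    exact h
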